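/- Let W be a contraction on a Hilbert space H with minimal isometric dilation U₊ on K₊ and residual subspace R = ⋂_{n≥0} U₊ⁿ K₊. Then the orthogonal projection P_H restricted to R has dense range in H if and only if W is of class C_{·1}, i.e., W*ⁿ h does not converge to 0 for any nonzero h ∈ H. -/

import Mathlib

open scoped InnerProductSpace
open Filter

section AuxLemmas

variable {K : Type*} [NormedAddCommGroup K] [InnerProductSpace ℂ K] [CompleteSpace K]

private lemma pow_norm_eq (Up : K →L[ℂ] K) (hUp : ∀ x, ‖Up x‖ = ‖x‖) (n : ℕ) (x : K) :
    ‖(Up ^ n) x‖ = ‖x‖ := by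
  induction n generalizing x with
  | zero => simp
  | succ n ih =>
    rw [pow_succ', ContinuousLinearMap.mul_apply, hUp, ih]

private lemma adjoint_pow' (Up : K →L[ℂ] K) (n : ℕ) :
    ContinuousLinearMap.adjoint (Up ^ n) = (ContinuousLinearMap.adjoint Up) ^ n := by
  rw [← ContinuousLinearMap.star_eq_adjoint, ← ContinuousLinearMap.star_eq_adjoint, star_pow]

/-- Core construction: if `‖Up*ⁿ k‖` does not tend to `0`, there is an element `r` of the
residual space with `⟪r, k⟫ ≠ 0`. -/
private lemma exists_residual_inner_ne_zero (Up : K →L[ℂ] K) (hUp : ∀ x, ‖Up x‖ = ‖x‖)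
    (k : K)
    (hna : ¬ Tendsto (fun n : ℕ => ‖((ContinuousLinearMap.adjoint Up) ^ n) k‖) atTop (nhds 0)) :
    ∃ r : K, (∀ n : ℕ, r ∈ Set.range ⇑(Up ^ n)) ∧ ⟪r, k⟫_ℂ ≠ 0 := by
  set Q := ContinuousLinearMap.adjoint Up with hQdef
  set a : ℕ → ℝ := fun n => ‖(Q ^ n) k‖ with ha
  have hUpn := pow_norm_eq Up hUp
  have hQn : ∀ n : ℕ, ContinuousLinearMap.adjoint (Up ^ n) = Q ^ n := adjoint_pow' Up
  have hQnorm : ‖Q‖ ≤ 1 := by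
    have h1 : ‖Q‖ = ‖Up‖ := LinearIsometryEquiv.norm_map _ Up
    have h2 : ‖Up‖ ≤ 1 := Up.opNorm_le_bound zero_le_one (fun x => by rw [hUp, one_mul])
    rw [h1]; exact h2
  have hmono : Antitone a := by
    apply antitone_nat_of_succ_le
    intro n
    have e : (Q ^ (n + 1)) k = Q ((Q ^ n) k) := by
      rw [pow_succ', ContinuousLinearMap.mul_apply]
    calc a (n + 1) = ‖Q ((Q ^ n) k)‖ := by rw [ha]; simp only [e]
      _ ≤ ‖Q‖ * ‖(Q ^ n) k‖ := Q.le_opNorm _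
      _ ≤ 1 * ‖(Q ^ n) k‖ := mul_le_mul_of_nonneg_right hQnorm (norm_nonneg _)
      _ = a n := one_mul _
  have hbdd : BddBelow (Set.range a) := ⟨0, by rintro x ⟨n, rfl⟩; exact norm_nonneg _⟩
  set c := ⨅ n, a n with hc
  have hca : Tendsto a atTop (nhds c) := tendsto_atTop_ciInf hmono hbdd
  have hc0 : (0 : ℝ) ≤ c := le_ciInf fun n => norm_nonneg _
  have hcne : c ≠ 0 := fun h => hna (h ▸ hca)
  have hle : ∀ n, c ≤ a n := fun n => ciInf_le hbdd n
  -- inner-product preservation of Up^n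
  have hiso : ∀ n (x y : K), ⟪(Up ^ n) x, (Up ^ n) y⟫_ℂ = ⟪x, y⟫_ℂ := fun n =>
    (ContinuousLinearMap.inner_map_map_iff_adjoint_comp_self (Up ^ n)).mpr
      ((ContinuousLinearMap.norm_map_iff_adjoint_comp_self (Up ^ n)).mp (hUpn n))
  set p : ℕ → K := fun n => (Up ^ n) ((Q ^ n) k) with hp
  have inner_kp : ∀ n, ⟪k, p n⟫_ℂ = ((a n : ℝ) : ℂ) ^ 2 := by
    intro n
    have e1 : ⟪(ContinuousLinearMap.adjoint (Up ^ n)) k, (Q ^ n) k⟫_ℂ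
        = ⟪k, (Up ^ n) ((Q ^ n) k)⟫_ℂ := ContinuousLinearMap.adjoint_inner_left (Up ^ n) _ _
    rw [hp]
    rw [← e1, hQn n, inner_self_eq_norm_sq_to_K]
    rfl
  have inner_pp : ∀ n d : ℕ, ⟪p n, p (n + d)⟫_ℂ = ((a (n + d) : ℝ) : ℂ) ^ 2 := by
    intro n d
    have h1 : p (n + d) = (Up ^ n) ((Up ^ d) ((Q ^ (n + d)) k)) := by
      rw [hp]
      simp only [pow_add, ContinuousLinearMap.mul_apply]
    rw [hp] at h1 ⊢
    rw [h1, hiso n]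
    rw [← ContinuousLinearMap.adjoint_inner_left (Up ^ d), hQn d]
    have h2 : (Q ^ d) ((Q ^ n) k) = (Q ^ (n + d)) k := by
      rw [add_comm, pow_add, ContinuousLinearMap.mul_apply]
    rw [h2, inner_self_eq_norm_sq_to_K]
    rfl
  have norm_p : ∀ n, ‖p n‖ = a n := fun n => hUpn n _
  have dist_p : ∀ n d : ℕ, ‖p n - p (n + d)‖ ^ 2 = a n ^ 2 - a (n + d) ^ 2 := by
    intro n d
    have := @norm_sub_sq ℂ _ _ _ _ (p n) (p (n + d))
    rw [inner_pp n d, norm_p, norm_p] at this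
    rw [this]
    have hre : RCLike.re (((a (n + d) : ℝ) : ℂ) ^ 2) = a (n + d) ^ 2 := by
      rw [← Complex.ofReal_pow]
      exact Complex.ofReal_re _
    rw [hre]; ring
  have hcauchy : CauchySeq p := by
    rw [Metric.cauchySeq_iff']
    intro ε hε
    have h2 : Tendsto (fun n => a n ^ 2) atTop (nhds (c ^ 2)) := hca.pow 2
    have h3 : ∀ᶠ n in atTop, a n ^ 2 < c ^ 2 + ε ^ 2 :=
      h2.eventually_lt_const (by nlinarith)
    obtain ⟨N, hN⟩ := h3.exists
    refine ⟨N, fun n hn => ?_⟩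
    obtain ⟨d, rfl⟩ := le_iff_exists_add.mp hn
    have hsq : ‖p (N + d) - p N‖ ^ 2 < ε ^ 2 := by
      rw [norm_sub_rev, dist_p N d]
      have : c ^ 2 ≤ a (N + d) ^ 2 := pow_le_pow_left₀ hc0 (hle _) 2
      nlinarith
    have := lt_of_pow_lt_pow_left₀ 2 hε.le hsq
    rwa [dist_eq_norm]
  obtain ⟨r, hr⟩ := cauchySeq_tendsto_of_complete hcauchy
  have hmem : ∀ n : ℕ, r ∈ Set.range ⇑(Up ^ n) := by
    intro n
    have hclosed : IsClosed (Set.range ⇑(Up ^ n)) :=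
      ((AddMonoidHomClass.isometry_of_norm (Up ^ n) (hUpn n)).isClosedEmbedding).isClosed_range
    apply hclosed.mem_of_tendsto hr
    filter_upwards [eventually_ge_atTop n] with m hm
    obtain ⟨d, rfl⟩ := le_iff_exists_add.mp hm
    exact ⟨(Up ^ d) ((Q ^ (n + d)) k), by
      rw [hp]; simp only [pow_add, ContinuousLinearMap.mul_apply]⟩
  have h3 : Tendsto (fun n => ⟪k, p n⟫_ℂ) atTop (nhds ⟪k, r⟫_ℂ) :=
    Tendsto.inner tendsto_const_nhds hr
  have h5 : Tendsto (fun n => ((a n : ℝ) : ℂ) ^ 2) atTop (nhds (((c : ℝ) : ℂ) ^ 2)) :=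
    ((Complex.continuous_ofReal.tendsto c).comp hca).pow 2
  have h6 : ⟪k, r⟫_ℂ = ((c : ℝ) : ℂ) ^ 2 := by
    refine tendsto_nhds_unique ?_ h5
    simpa only [inner_kp] using h3
  refine ⟨r, hmem, ?_⟩
  have h7 : ⟪k, r⟫_ℂ ≠ 0 := by
    rw [h6]
    exact pow_ne_zero 2 (by exact_mod_cast hcne)
  exact fun h0 => h7 (by rw [← inner_conj_symm k r, h0, map_zero])

end AuxLemmas

section KeyLemma

variable {H K : Type*}
    [NormedAddCommGroup H] [InnerProductSpace ℂ H] [CompleteSpace H]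
    [NormedAddCommGroup K] [InnerProductSpace ℂ K] [CompleteSpace K]

private lemma adjoint_intertwine
    (J : H →ₗᵢ[ℂ] K) (W : H →L[ℂ] H) (Up : K →L[ℂ] K)
    (hdil : ∀ (n : ℕ) (h : H),
      (W ^ n) h = (ContinuousLinearMap.adjoint J.toContinuousLinearMap) ((Up ^ n) (J h)))
    (hmin : Dense (↑(Submodule.span ℂ {x : K | ∃ (n : ℕ) (h : H), x = (Up ^ n) (J h)}) : Set K))
    (n : ℕ) (h : H) :
    ((ContinuousLinearMap.adjoint Up) ^ n) (J.toContinuousLinearMap h)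
      = J.toContinuousLinearMap (((ContinuousLinearMap.adjoint W) ^ n) h) := by
  set Jc := J.toContinuousLinearMap with hJcdef
  have hJc : ∀ x, J x = Jc x := fun _ => rfl
  have key : ∀ g : H, (ContinuousLinearMap.adjoint Up) (Jc g)
      = Jc ((ContinuousLinearMap.adjoint W) g) := by
    intro g
    apply hmin.eq_of_inner_right ℂ
    intro v hv
    refine Submodule.span_induction
      (p := fun x _ => ⟪x, (ContinuousLinearMap.adjoint Up) (Jc g)⟫_ℂ
        = ⟪x, Jc ((ContinuousLinearMap.adjoint W) g)⟫_ℂ) ?_ ?_ ?_ ?_ hv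
    · rintro x ⟨m, u, rfl⟩
      rw [ContinuousLinearMap.adjoint_inner_right]
      have e1 : Up ((Up ^ m) (J u)) = (Up ^ (m + 1)) (J u) := by
        rw [pow_succ', ContinuousLinearMap.mul_apply]
      rw [e1]
      rw [← ContinuousLinearMap.adjoint_inner_left Jc, ← hdil (m + 1) u]
      rw [← ContinuousLinearMap.adjoint_inner_left Jc, ← hdil m u,
        ContinuousLinearMap.adjoint_inner_right]
      have e2 : W ((W ^ m) u) = (W ^ (m + 1)) u := by
        rw [pow_succ', ContinuousLinearMap.mul_apply]
      rw [e2]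
    · simp
    · intro x y _ _ h1 h2
      rw [inner_add_left, inner_add_left, h1, h2]
    · intro cc x _ h1
      rw [inner_smul_left, inner_smul_left, h1]
  induction n generalizing h with
  | zero => simp
  | succ n ih =>
    rw [pow_succ, ContinuousLinearMap.mul_apply, key h, ih]
    congr 1

end KeyLemma

/-- `P_H` restricted to the residual subspace `R = ⋂_{n≥0} Upⁿ K₊` has dense
range in `H` iff the contraction `W` is of class `C_{·1}`. -/
theorem dense_projection_residual_iff_C1
    {H K : Type*}
    [NormedAddCommGroup H] [InnerProductSpace ℂ H] [CompleteSpace H]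
    [NormedAddCommGroup K] [InnerProductSpace ℂ K] [CompleteSpace K]
    (J : H →ₗᵢ[ℂ] K)
    (W : H →L[ℂ] H) (hW : ‖W‖ ≤ 1)
    (Up : K →L[ℂ] K) (hUp : ∀ x, ‖Up x‖ = ‖x‖)
    (hdil : ∀ (n : ℕ) (h : H),
      (W ^ n) h = (ContinuousLinearMap.adjoint J.toContinuousLinearMap) ((Up ^ n) (J h)))
    (hmin : Dense (↑(Submodule.span ℂ {x : K | ∃ (n : ℕ) (h : H), x = (Up ^ n) (J h)}) : Set K)) :
    Dense ((ContinuousLinearMap.adjoint J.toContinuousLinearMap) ''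
        {y : K | ∀ n : ℕ, y ∈ Set.range (Up ^ n)}) ↔
      (∀ h : H, h ≠ 0 →
        ¬ Tendsto (fun n : ℕ => ((ContinuousLinearMap.adjoint W) ^ n) h) atTop (nhds 0)) := by
  set Jc := J.toContinuousLinearMap with hJcdef
  set Js := ContinuousLinearMap.adjoint Jc with hJsdef
  have hJc : ∀ x, J x = Jc x := fun _ => rfl
  have hinter := adjoint_intertwine J W Up hdil hmin
  have hUpn := pow_norm_eq Up hUp
  -- norm identity : ‖(Up*)ⁿ (J h)‖ = ‖(W*)ⁿ h‖
  have hnorm : ∀ (n : ℕ) (h : H),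
      ‖((ContinuousLinearMap.adjoint Up) ^ n) (Jc h)‖
        = ‖((ContinuousLinearMap.adjoint W) ^ n) h‖ := by
    intro n h
    rw [hinter n h]
    exact J.norm_map _
  constructor
  · -- density implies C_{·1}
    intro hdense h hne htend
    apply hne
    -- h is orthogonal to the dense image, hence zero
    have hzero : ∀ x ∈ (Js '' {y : K | ∀ n : ℕ, y ∈ Set.range ⇑(Up ^ n)}), ⟪x, h⟫_ℂ = 0 := by
      rintro x ⟨r, hrmem, rfl⟩
      have hRn : ∀ n : ℕ, ‖⟪r, Jc h⟫_ℂ‖ ≤ ‖r‖ * ‖((ContinuousLinearMap.adjoint W) ^ n) h‖ := by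
        intro n
        obtain ⟨s, rfl⟩ := hrmem n
        have e1 : ⟪(Up ^ n) s, Jc h⟫_ℂ = ⟪s, ((ContinuousLinearMap.adjoint Up) ^ n) (Jc h)⟫_ℂ := by
          rw [← adjoint_pow', ContinuousLinearMap.adjoint_inner_right]
        rw [e1]
        calc ‖⟪s, ((ContinuousLinearMap.adjoint Up) ^ n) (Jc h)⟫_ℂ‖
            ≤ ‖s‖ * ‖((ContinuousLinearMap.adjoint Up) ^ n) (Jc h)‖ := norm_inner_le_norm _ _
          _ = ‖(Up ^ n) s‖ * ‖((ContinuousLinearMap.adjoint W) ^ n) h‖ := by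
              rw [hUpn n s, hnorm n h]
      have hlim : Tendsto (fun n => ‖r‖ * ‖((ContinuousLinearMap.adjoint W) ^ n) h‖)
          atTop (nhds 0) := by
        have := (tendsto_zero_iff_norm_tendsto_zero.mp htend).const_mul ‖r‖
        simpa using this
      have h0 : ‖⟪r, Jc h⟫_ℂ‖ ≤ 0 :=
        le_of_tendsto_of_tendsto' tendsto_const_nhds hlim hRn
      have : ⟪r, Jc h⟫_ℂ = 0 := norm_le_zero_iff.mp h0
      rw [ContinuousLinearMap.adjoint_inner_left]
      exact this
    have : (fun x : H => ⟪x, h⟫_ℂ) = fun _ => (0 : ℂ) := by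
      apply Continuous.ext_on hdense
      · exact Continuous.inner continuous_id continuous_const
      · exact continuous_const
      · intro x hx
        exact hzero x hx
    have h2 : ⟪h, h⟫_ℂ = 0 := congrFun this h
    exact inner_self_eq_zero.mp h2
  · -- C_{·1} implies density
    intro hC1
    -- residual subspace as a submodule
    set Rsub : Submodule ℂ K :=
      { carrier := {y : K | ∀ n : ℕ, y ∈ Set.range ⇑(Up ^ n)}
        add_mem' := by
          rintro a b ha hb n
          obtain ⟨x, hx⟩ := ha n; obtain ⟨y, hy⟩ := hb n
          exact ⟨x + y, by rw [map_add, hx, hy]⟩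
        zero_mem' := fun n => ⟨0, map_zero _⟩
        smul_mem' := by
          rintro cc x hx n
          obtain ⟨y, hy⟩ := hx n
          exact ⟨cc • y, by rw [map_smul, hy]⟩ } with hRsubdef
    have himg : (Js '' {y : K | ∀ n : ℕ, y ∈ Set.range ⇑(Up ^ n)})
        = ↑(Rsub.map (Js : K →ₗ[ℂ] H)) := by
      rw [Submodule.map_coe]
      rfl
    rw [himg]
    rw [Submodule.dense_iff_topologicalClosure_eq_top,
      Submodule.topologicalClosure_eq_top_iff]
    rw [Submodule.eq_bot_iff]
    intro v hv
    by_contra hvne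
    obtain ⟨r, hrmem, hrinner⟩ := exists_residual_inner_ne_zero Up hUp (Jc v) (by
      intro hten
      refine hC1 v hvne ?_
      rw [tendsto_zero_iff_norm_tendsto_zero]
      have : (fun n : ℕ => ‖((ContinuousLinearMap.adjoint Up) ^ n) (Jc v)‖)
          = fun n : ℕ => ‖((ContinuousLinearMap.adjoint W) ^ n) v‖ := funext fun n => hnorm n v
      rwa [this] at hten)
    apply hrinner
    have := (Submodule.mem_orthogonal _ v).mp hv (Js r) ⟨r, hrmem, rfl⟩
    rw [ContinuousLinearMap.adjoint_inner_left] at this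
    exact this
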